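/- arXiv:2011.00364 — 5 statements merged into one kernel-verified Lean document; each statement's English description precedes it below -/
import Mathlib

section
/- For any L > 0, κ > 0, q ≥ κ, t ≥ 0, and δ > 0, the inequality (L/κ)·t^κ ≤ (Λ/q)·t^q + δ/2 holds, where Λ = ((2(q-κ))/(δ·q·κ))^((q-κ)/κ) · L^(q/κ). -/
theorem stmt_0 (L κ q t δ : ℝ) (hL : 0 < L) (hκ : 0 < κ) (hq : κ ≤ q)
    (ht : 0 ≤ t) (hδ : 0 < δ) :
    L / κ * t ^ κ ≤
      ((2 * (q - κ)) / (δ * q * κ)) ^ ((q - κ) / κ) * L ^ (q / κ) / q * t ^ q + δ / 2 := by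
  rcases eq_or_lt_of_le hq with rfl | hlt
  · simp only [sub_self, zero_div, Real.rpow_zero, one_mul, div_self hκ.ne', Real.rpow_one]
    nlinarith [Real.rpow_nonneg ht κ]
  · have hq0 : 0 < q := hκ.trans hlt
    have hd : 0 < q - κ := by linarith
    set m : ℝ := 2 * (q - κ) / (δ * q * κ) with hm
    have hm0 : 0 < m := by positivity
    set e : ℝ := (q - κ) / κ with he
    set X : ℝ := m ^ e * L ^ (q / κ) / κ with hX
    have hX0 : 0 < X := by positivity
    set c : ℝ := X ^ (κ / q) with hc
    have hc0 : 0 < c := Real.rpow_pos_of_pos hX0 _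
    have hconj : (q / κ).HolderConjugate (q / (q - κ)) := by
      rw [Real.holderConjugate_iff]
      constructor
      · rw [lt_div_iff₀ hκ]; linarith
      · field_simp
        ring
    have hy := Real.young_inequality_of_nonneg
      (mul_nonneg hc0.le (Real.rpow_nonneg ht κ)) (by positivity : (0:ℝ) ≤ L / (κ * c)) hconj
    have key : c * t ^ κ * (L / (κ * c)) = L / κ * t ^ κ := by
      field_simp
    rw [key] at hy
    -- first term
    have hcq : c ^ (q / κ) = X := by
      rw [hc, ← Real.rpow_mul hX0.le]
      have : κ / q * (q / κ) = 1 := by field_simp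
      rw [this, Real.rpow_one]
    have htq : (t ^ κ) ^ (q / κ) = t ^ q := by
      rw [← Real.rpow_mul ht]
      congr 1
      field_simp
    have h1 : (c * t ^ κ) ^ (q / κ) / (q / κ) = m ^ e * L ^ (q / κ) / q * t ^ q := by
      rw [Real.mul_rpow hc0.le (Real.rpow_nonneg ht κ), hcq, htq, hX]
      field_simp
    -- second term
    have hcs : c ^ (q / (q - κ)) = X ^ (κ / (q - κ)) := by
      rw [hc, ← Real.rpow_mul hX0.le]
      congr 1
      rw [div_mul_div_comm, mul_comm κ q, mul_div_mul_left _ _ hq0.ne']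
    have hXs : X ^ (κ / (q - κ)) = m * L ^ (q / (q - κ)) / κ ^ (κ / (q - κ)) := by
      rw [hX, Real.div_rpow (by positivity) hκ.le,
        Real.mul_rpow (by positivity) (by positivity),
        ← Real.rpow_mul hm0.le, ← Real.rpow_mul hL.le]
      have e1 : e * (κ / (q - κ)) = 1 := by rw [he]; field_simp
      have e2 : q / κ * (κ / (q - κ)) = q / (q - κ) := by
        rw [div_mul_div_comm, mul_comm q κ, mul_div_mul_left _ _ hκ.ne']
      rw [e1, e2, Real.rpow_one]
    have hκs : κ ^ (q / (q - κ)) = κ * κ ^ (κ / (q - κ)) := by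
      have : q / (q - κ) = 1 + κ / (q - κ) := by field_simp; ring
      rw [this, Real.rpow_add hκ, Real.rpow_one]
    have h2 : (L / (κ * c)) ^ (q / (q - κ)) / (q / (q - κ)) = δ / 2 := by
      have hmain : (L / (κ * c)) ^ (q / (q - κ)) = 1 / (κ * m) := by
        rw [Real.div_rpow hL.le (by positivity), Real.mul_rpow hκ.le hc0.le, hcs, hXs, hκs]
        have hLs : (0:ℝ) < L ^ (q / (q - κ)) := Real.rpow_pos_of_pos hL _
        have hκs' : (0:ℝ) < κ ^ (κ / (q - κ)) := Real.rpow_pos_of_pos hκ _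
        field_simp
      rw [hmain, hm]
      field_simp
    rw [h1, h2] at hy
    exact hy
end

section
/- Let F: ℝ^d → ℝ^d be L-Lipschitz with respect to the Euclidean norm and suppose there exists u* ∈ ℝ^d with F(u*) = 0 such that for all u, ⟨F(u), u - u*⟩ ≥ -(ρ/2)‖F(u)‖², with 0 ≤ ρ < 1/(4L). Let the EG+ iterates be ū_k = u_k - (a_k/β)F(u_k), u_{k+1} = u_k - a_k F(ū_k) with β = 1/2, a_k = 1/(2L). Then for every k ≥ 0: (1/2)‖u* - u_{k+1}‖² - (1/2)‖u* - u_k‖² ≤ -(1/(4L))(1/(4L) - ρ)‖F(ū_k)‖². -/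
open scoped InnerProductSpace

theorem stmt_2 {d : ℕ} (L ρ : ℝ) (hL : 0 < L)
    (F : EuclideanSpace ℝ (Fin d) → EuclideanSpace ℝ (Fin d))
    (hLip : ∀ u v, ‖F u - F v‖ ≤ L * ‖u - v‖)
    (ustar : EuclideanSpace ℝ (Fin d)) (hzero : F ustar = 0)
    (hρ0 : 0 ≤ ρ) (hρ : ρ < 1 / (4 * L))
    (hweak : ∀ u, (inner ℝ (F u) (u - ustar) : ℝ) ≥ -(ρ / 2) * ‖F u‖ ^ 2)
    (u ubar : ℕ → EuclideanSpace ℝ (Fin d))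
    (hubar : ∀ k, ubar k = u k - (1 / L) • F (u k))
    (hnext : ∀ k, u (k + 1) = u k - (1 / (2 * L)) • F (ubar k)) (k : ℕ) :
    (1 / 2) * ‖ustar - u (k + 1)‖ ^ 2 - (1 / 2) * ‖ustar - u k‖ ^ 2 ≤
      -(1 / (4 * L)) * (1 / (4 * L) - ρ) * ‖F (ubar k)‖ ^ 2 := by
  have hL' : L ≠ 0 := ne_of_gt hL
  set g := F (ubar k) with hg
  set f := F (u k) with hf
  -- Lipschitz bound: ‖g - f‖ ≤ ‖f‖
  have hdiff : ‖g - f‖ ≤ ‖f‖ := by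
    have h1 := hLip (ubar k) (u k)
    have h2 : ubar k - u k = -((1 / L) • f) := by rw [hubar k]; abel
    rw [h2, norm_neg, norm_smul] at h1
    have : ‖(1 : ℝ) / L‖ = 1 / L := by
      rw [Real.norm_eq_abs, abs_of_pos (by positivity)]
    rw [this] at h1
    calc ‖g - f‖ ≤ L * (1 / L * ‖f‖) := h1
      _ = ‖f‖ := by field_simp
  -- ⟪g, f⟫ ≥ ½‖g‖²
  have hgf : (inner ℝ g f : ℝ) ≥ (1 / 2) * ‖g‖ ^ 2 := by
    have hsq : ‖g - f‖ ^ 2 ≤ ‖f‖ ^ 2 := by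
      have := norm_nonneg (g - f)
      nlinarith
    have hexp : ‖g - f‖ ^ 2 = ‖g‖ ^ 2 - 2 * (inner ℝ g f : ℝ) + ‖f‖ ^ 2 := by
      rw [← real_inner_self_eq_norm_sq, ← real_inner_self_eq_norm_sq,
        ← real_inner_self_eq_norm_sq]
      simp only [inner_sub_sub_self]
      ring_nf
      rw [real_inner_comm f g]
      ring
    nlinarith
  -- weak MVI at ubar k
  have hmvi : (inner ℝ g (ubar k - ustar) : ℝ) ≥ -(ρ / 2) * ‖g‖ ^ 2 := hweak (ubar k)
  -- decomposition of ⟪g, u k - ustar⟫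
  have hdec : (inner ℝ g (u k - ustar) : ℝ)
      = (inner ℝ g (ubar k - ustar) : ℝ) + (1 / L) * (inner ℝ g f : ℝ) := by
    have h2 : u k - ustar = (ubar k - ustar) + (1 / L) • f := by rw [hubar k]; abel
    rw [h2, inner_add_right, real_inner_smul_right]
  -- norm expansion
  have hnorm : ‖ustar - u (k + 1)‖ ^ 2
      = ‖ustar - u k‖ ^ 2 - 2 * (1 / (2 * L)) * (inner ℝ g (u k - ustar) : ℝ)
        + (1 / (2 * L)) ^ 2 * ‖g‖ ^ 2 := by
    have h2 : ustar - u (k + 1) = (ustar - u k) + (1 / (2 * L)) • g := by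
      rw [hnext k]; abel
    rw [h2, norm_add_sq_real, real_inner_smul_right, norm_smul]
    have : ‖(1 : ℝ) / (2 * L)‖ = 1 / (2 * L) := by
      rw [Real.norm_eq_abs, abs_of_pos (by positivity)]
    rw [this]
    have h4 : (inner ℝ (ustar - u k) g : ℝ) = -(inner ℝ g (u k - ustar) : ℝ) := by
      rw [real_inner_comm, show ustar - u k = -(u k - ustar) by abel, inner_neg_right]
    rw [h4]
    ring
  have hG : (0 : ℝ) ≤ ‖g‖ ^ 2 := by positivity
  have hinv : L * (1 / L) = 1 := by field_simp
  rw [hnorm, hdec]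
  have key : (inner ℝ g (ubar k - ustar) : ℝ) + (1 / L) * (inner ℝ g f : ℝ)
      ≥ -(ρ / 2) * ‖g‖ ^ 2 + (1 / (2 * L)) * ‖g‖ ^ 2 := by
    have h3 : (1 / L) * (inner ℝ g f : ℝ) ≥ (1 / L) * ((1 / 2) * ‖g‖ ^ 2) := by
      apply mul_le_mul_of_nonneg_left hgf (by positivity)
    have : (1 / L) * ((1 / 2) * ‖g‖ ^ 2) = (1 / (2 * L)) * ‖g‖ ^ 2 := by
      rw [one_div, one_div, one_div, mul_inv]; ring
    rw [this] at h3
    linarith [hmvi, h3]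
  set c : ℝ := 1 / (2 * L) with hc
  have hcpos : 0 < c := by positivity
  have hc4 : 1 / (4 * L) = c / 2 := by rw [hc]; field_simp; ring
  rw [hc4]
  have hkey2 : c * ((inner ℝ g (ubar k - ustar) : ℝ) + 1 / L * (inner ℝ g f : ℝ))
      ≥ c * ((-(ρ / 2) + c) * ‖g‖ ^ 2) := by
    apply mul_le_mul_of_nonneg_left _ (le_of_lt hcpos)
    have : 1 / (2 * L) = c := rfl
    linarith [key]
  have hc2G : 0 ≤ c ^ 2 * ‖g‖ ^ 2 := by positivity
  nlinarith [hkey2, hc2G]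
end

section
/- Under the assumptions of the EG+ convergence theorem (F L-Lipschitz on ℝ^d with Euclidean norm, weak MVI assumption at a zero u* of F with parameter ρ ∈ [0, 1/(4L)), iterates with β = 1/2 and a_k = 1/(2L)), for every k ≥ 1: (1/(k+1))·Σ_{i=0}^{k} ‖F(ū_i)‖² ≤ 2L‖u₀ - u*‖² / ((k+1)(1/(4L) - ρ)). -/
open scoped InnerProductSpace

set_option maxHeartbeats 1000000 in
theorem stmt_3 {d : ℕ} (L ρ : ℝ) (hL : 0 < L)
    (F : EuclideanSpace ℝ (Fin d) → EuclideanSpace ℝ (Fin d))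
    (hLip : ∀ u v, ‖F u - F v‖ ≤ L * ‖u - v‖)
    (ustar : EuclideanSpace ℝ (Fin d)) (hzero : F ustar = 0)
    (hρ0 : 0 ≤ ρ) (hρ : ρ < 1 / (4 * L))
    (hweak : ∀ u, (inner ℝ (F u) (u - ustar) : ℝ) ≥ -(ρ / 2) * ‖F u‖ ^ 2)
    (u ubar : ℕ → EuclideanSpace ℝ (Fin d))
    (hubar : ∀ k, ubar k = u k - (1 / L) • F (u k))
    (hnext : ∀ k, u (k + 1) = u k - (1 / (2 * L)) • F (ubar k))
    (k : ℕ) (hk : 1 ≤ k) :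
    (1 / ((k : ℝ) + 1)) * ∑ i ∈ Finset.range (k + 1), ‖F (ubar i)‖ ^ 2 ≤
      2 * L * ‖u 0 - ustar‖ ^ 2 / (((k : ℝ) + 1) * (1 / (4 * L) - ρ)) := by
  have hLne : L ≠ 0 := ne_of_gt hL
  have hc : (0:ℝ) < 1 / (4 * L) - ρ := by linarith
  set c : ℝ := (1 / (2 * L)) * (1 / (4 * L) - ρ) with hcdef
  have hcpos : 0 < c := by
    apply mul_pos _ hc
    positivity
  have step : ∀ i, ‖u (i + 1) - ustar‖ ^ 2 ≤ ‖u i - ustar‖ ^ 2 - c * ‖F (ubar i)‖ ^ 2 := by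
    intro i
    set g := F (ubar i) with hg
    set f := F (u i) with hf
    have hgf : ‖g - f‖ ≤ ‖f‖ := by
      have h := hLip (ubar i) (u i)
      have h1 : ubar i - u i = -((1 / L) • f) := by rw [hubar i]; abel
      rw [h1, norm_neg, norm_smul] at h
      have : ‖(1 / L : ℝ)‖ = 1 / L := by
        rw [Real.norm_eq_abs, abs_of_pos]; positivity
      rw [this] at h
      calc ‖g - f‖ ≤ L * (1 / L * ‖f‖) := h
        _ = ‖f‖ := by field_simp
    have hC : (inner ℝ g f : ℝ) ≥ ‖g‖ ^ 2 / 2 := by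
      have h2 : ‖g - f‖ ^ 2 ≤ ‖f‖ ^ 2 := by
        have := norm_nonneg (g - f)
        nlinarith
      rw [@norm_sub_sq_real] at h2
      linarith
    have hA : (inner ℝ g (ubar i - ustar) : ℝ) ≥ -(ρ / 2) * ‖g‖ ^ 2 := hweak (ubar i)
    have hx : u i - ustar = (ubar i - ustar) + (1 / L) • f := by
      rw [hubar i]; abel
    have hinner : (inner ℝ g (u i - ustar) : ℝ)
        = (inner ℝ g (ubar i - ustar) : ℝ) + (1 / L) * (inner ℝ g f : ℝ) := by
      rw [hx, inner_add_right, real_inner_smul_right]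
    have hnorm : ‖u (i + 1) - ustar‖ ^ 2
        = ‖u i - ustar‖ ^ 2 - 2 * ((1 / (2 * L)) * (inner ℝ g (u i - ustar) : ℝ))
          + (1 / (2 * L)) ^ 2 * ‖g‖ ^ 2 := by
      rw [hnext i]
      have h3 : u i - (1 / (2 * L)) • g - ustar = (u i - ustar) - (1 / (2 * L)) • g := by abel
      rw [h3, @norm_sub_sq_real, real_inner_smul_right, norm_smul]
      have : ‖(1 / (2 * L) : ℝ)‖ = 1 / (2 * L) := by
        rw [Real.norm_eq_abs, abs_of_pos]; positivity
      rw [this, real_inner_comm]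
      ring
    have hG : (0:ℝ) ≤ ‖g‖ ^ 2 := by positivity
    have hLinv : (1 / (2 * L)) * (2 * L) = 1 := by field_simp
    rw [hnorm, hinner, hcdef]
    have hQ : (1 / L) * (inner ℝ g f : ℝ) ≥ (1 / L) * (‖g‖ ^ 2 / 2) := by
      apply mul_le_mul_of_nonneg_left hC (by positivity)
    have key : 2 * ((1 / (2 * L)) * ((inner ℝ g (ubar i - ustar) : ℝ) + (1 / L) * (inner ℝ g f : ℝ)))
        ≥ (1 / (2 * L)) ^ 2 * ‖g‖ ^ 2 + (1 / (2 * L)) * (1 / (4 * L) - ρ) * ‖g‖ ^ 2 := by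
      have h4 : (inner ℝ g (ubar i - ustar) : ℝ) + (1 / L) * (inner ℝ g f : ℝ)
          ≥ -(ρ / 2) * ‖g‖ ^ 2 + (1 / L) * (‖g‖ ^ 2 / 2) := by linarith
      have h5 : 2 * ((1 / (2 * L)) * ((inner ℝ g (ubar i - ustar) : ℝ) + (1 / L) * (inner ℝ g f : ℝ)))
          ≥ 2 * ((1 / (2 * L)) * (-(ρ / 2) * ‖g‖ ^ 2 + (1 / L) * (‖g‖ ^ 2 / 2))) := by
        have := mul_le_mul_of_nonneg_left h4 (le_of_lt (show (0:ℝ) < 1 / (2 * L) by positivity))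
        linarith
      refine le_trans ?_ h5
      have h6 : (1 / (2 * L)) ^ 2 * ‖g‖ ^ 2 + (1 / (2 * L)) * (1 / (4 * L) - ρ) * ‖g‖ ^ 2
          ≤ 2 * ((1 / (2 * L)) * (-(ρ / 2) * ‖g‖ ^ 2 + (1 / L) * (‖g‖ ^ 2 / 2))) := by
        have e1 : (0:ℝ) < L := hL
        have h7 : 2 * ((1 / (2 * L)) * (-(ρ / 2) * ‖g‖ ^ 2 + (1 / L) * (‖g‖ ^ 2 / 2)))
            - ((1 / (2 * L)) ^ 2 * ‖g‖ ^ 2 + (1 / (2 * L)) * (1 / (4 * L) - ρ) * ‖g‖ ^ 2)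
            = (1 / (2 * L)) * (1 / (4 * L)) * ‖g‖ ^ 2 := by
          field_simp
          ring
        nlinarith [mul_nonneg (mul_nonneg (le_of_lt (show (0:ℝ) < 1/(2*L) by positivity)) (le_of_lt (show (0:ℝ) < 1/(4*L) by positivity))) hG]
      exact h6
    linarith
  have tel : ∀ n, c * ∑ i ∈ Finset.range n, ‖F (ubar i)‖ ^ 2
      ≤ ‖u 0 - ustar‖ ^ 2 - ‖u n - ustar‖ ^ 2 := by
    intro n
    induction n with
    | zero => simp
    | succ n ih =>
      rw [Finset.sum_range_succ, mul_add]
      have := step n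
      linarith
  set S := ∑ i ∈ Finset.range (k + 1), ‖F (ubar i)‖ ^ 2 with hS
  set B := ‖u 0 - ustar‖ ^ 2 with hB
  have hSB : c * S ≤ B := by
    have := tel (k + 1)
    have h0 : (0:ℝ) ≤ ‖u (k + 1) - ustar‖ ^ 2 := by positivity
    linarith
  have hSnn : 0 ≤ S := Finset.sum_nonneg fun i _ => by positivity
  have hBnn : 0 ≤ B := by positivity
  clear_value c S B
  have hSle : S ≤ 2 * L * B / (1 / (4 * L) - ρ) := by
    rw [le_div_iff₀ hc]
    have h2L : c * (2 * L) = 1 / (4 * L) - ρ := by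
      rw [hcdef]; field_simp
    calc S * (1 / (4 * L) - ρ) = 2 * L * (c * S) := by rw [← h2L]; ring
      _ ≤ 2 * L * B := by
          apply mul_le_mul_of_nonneg_left hSB (by positivity)
  have hk1 : (0:ℝ) < (k : ℝ) + 1 := by positivity
  have heq : 2 * L * B / (((k : ℝ) + 1) * (1 / (4 * L) - ρ))
      = (1 / ((k : ℝ) + 1)) * (2 * L * B / (1 / (4 * L) - ρ)) := by
    field_simp
    try ring
  rw [heq]
  apply mul_le_mul_of_nonneg_left hSle (by positivity)
end

section
/- Under the assumptions of the EG+ convergence theorem, min over 0 ≤ i ≤ k of ‖F(ū_i)‖² ≤ 2L‖u₀ - u*‖² / ((k+1)(1/(4L) - ρ)). In particular ‖F(ū_i)‖ → 0 as i → ∞. -/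
open scoped InnerProductSpace

theorem stmt_4 {d : ℕ} (L ρ : ℝ) (hL : 0 < L)
    (F : EuclideanSpace ℝ (Fin d) → EuclideanSpace ℝ (Fin d))
    (hLip : ∀ u v, ‖F u - F v‖ ≤ L * ‖u - v‖)
    (ustar : EuclideanSpace ℝ (Fin d)) (hzero : F ustar = 0)
    (hρ0 : 0 ≤ ρ) (hρ : ρ < 1 / (4 * L))
    (hweak : ∀ u, (inner ℝ (F u) (u - ustar) : ℝ) ≥ -(ρ / 2) * ‖F u‖ ^ 2)
    (u ubar : ℕ → EuclideanSpace ℝ (Fin d))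
    (hubar : ∀ k, ubar k = u k - (1 / L) • F (u k))
    (hnext : ∀ k, u (k + 1) = u k - (1 / (2 * L)) • F (ubar k)) :
    (∀ k : ℕ, ∃ i ≤ k, ‖F (ubar i)‖ ^ 2 ≤
      2 * L * ‖u 0 - ustar‖ ^ 2 / (((k : ℝ) + 1) * (1 / (4 * L) - ρ))) ∧
    Filter.Tendsto (fun i => ‖F (ubar i)‖) Filter.atTop (nhds 0) := by
  have hLne : L ≠ 0 := ne_of_gt hL
  have h14 : (1:ℝ) / (4 * L) ≤ 1 / (2 * L) := by
    apply one_div_le_one_div_of_le (by linarith) (by linarith)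
  have hd : (0:ℝ) < 1 / (4 * L) - ρ := by linarith
  set c : ℝ := (1 / (2 * L)) * (1 / (2 * L) - ρ) with hc
  have hcpos : 0 < c := by
    apply mul_pos (by positivity)
    linarith
  have h2Lc : 2 * L * c = 1 / (2 * L) - ρ := by
    rw [hc]; field_simp
  -- key one-step descent inequality
  have key : ∀ k, ‖u (k + 1) - ustar‖ ^ 2 ≤ ‖u k - ustar‖ ^ 2 - c * ‖F (ubar k)‖ ^ 2 := by
    intro k
    set g := F (ubar k) with hg
    set f := F (u k) with hf
    set p : ℝ := inner ℝ g (ubar k - ustar) with hp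
    set q : ℝ := inner ℝ g f with hq
    have hdiff : u (k + 1) - ustar = (u k - ustar) - (1 / (2 * L)) • g := by
      rw [hnext k]; abel
    have hsplit : u k - ustar = (ubar k - ustar) + (1 / L) • f := by
      rw [hubar k]; module
    have expand : ‖u (k + 1) - ustar‖ ^ 2
        = ‖u k - ustar‖ ^ 2 - 2 * ((1 / (2 * L)) * (p + (1 / L) * q))
          + (1 / (2 * L)) ^ 2 * ‖g‖ ^ 2 := by
      rw [hdiff, @norm_sub_sq_real, real_inner_smul_right, norm_smul, mul_pow,
        Real.norm_eq_abs, abs_of_pos (by positivity : (0:ℝ) < 1 / (2 * L))]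
      have : (inner ℝ (u k - ustar) g : ℝ) = p + (1 / L) * q := by
        rw [real_inner_comm, hp, hq]
        nth_rewrite 1 [hsplit]
        rw [inner_add_right, real_inner_smul_right]
      rw [this]
    have expand2 : 4 * L ^ 2 * ‖u (k + 1) - ustar‖ ^ 2
        = 4 * L ^ 2 * ‖u k - ustar‖ ^ 2 - 4 * L * p - 4 * q + ‖g‖ ^ 2 := by
      rw [expand]; field_simp; ring
    have hw : p ≥ -(ρ / 2) * ‖g‖ ^ 2 := by
      exact hweak (ubar k)
    have hnrm : ‖g - f‖ ≤ ‖f‖ := by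
      have h1 : ‖g - f‖ ≤ L * ‖ubar k - u k‖ := hLip _ _
      have h2 : ubar k - u k = -((1 / L) • f) := by rw [hubar k]; module
      rw [h2, norm_neg, norm_smul, Real.norm_eq_abs,
        abs_of_pos (by positivity : (0:ℝ) < 1 / L)] at h1
      calc ‖g - f‖ ≤ L * (1 / L * ‖f‖) := h1
        _ = ‖f‖ := by field_simp
    have hip : 2 * q ≥ ‖g‖ ^ 2 := by
      have hsq : ‖g - f‖ ^ 2 = ‖g‖ ^ 2 - 2 * q + ‖f‖ ^ 2 := by
        rw [@norm_sub_sq_real, hq]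
      nlinarith [norm_nonneg (g - f), norm_nonneg f, hnrm]
    have hfin : 4 * L ^ 2 * ‖u (k + 1) - ustar‖ ^ 2
        ≤ 4 * L ^ 2 * (‖u k - ustar‖ ^ 2 - c * ‖F (ubar k)‖ ^ 2) := by
      have hrhs : 4 * L ^ 2 * (‖u k - ustar‖ ^ 2 - c * ‖g‖ ^ 2)
          = 4 * L ^ 2 * ‖u k - ustar‖ ^ 2 - (1 - 2 * L * ρ) * ‖g‖ ^ 2 := by
        rw [hc]; field_simp; ring
      have hwscaled : 4 * L * (-(ρ / 2) * ‖g‖ ^ 2) ≤ 4 * L * p :=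
        mul_le_mul_of_nonneg_left hw (by linarith)
      rw [expand2, hg] at *
      rw [hrhs]
      linarith
    have h4pos : (0:ℝ) < 4 * L ^ 2 := by positivity
    exact le_of_mul_le_mul_left hfin h4pos
  -- telescoping
  have main : ∀ k, c * ∑ i ∈ Finset.range (k + 1), ‖F (ubar i)‖ ^ 2
      + ‖u (k + 1) - ustar‖ ^ 2 ≤ ‖u 0 - ustar‖ ^ 2 := by
    intro k
    induction k with
    | zero => simpa using by have := key 0; linarith
    | succ n ih =>
        rw [Finset.sum_range_succ, mul_add]
        have := key (n + 1)
        linarith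
  have sumle : ∀ k, c * ∑ i ∈ Finset.range (k + 1), ‖F (ubar i)‖ ^ 2
      ≤ ‖u 0 - ustar‖ ^ 2 := by
    intro k
    have h := main k
    nlinarith [sq_nonneg ‖u (k + 1) - ustar‖]
  constructor
  · intro k
    obtain ⟨i, hi, hmin⟩ := Finset.exists_min_image (Finset.range (k + 1))
      (fun i => ‖F (ubar i)‖ ^ 2) ⟨0, by simp⟩
    have hik : i ≤ k := Nat.lt_succ_iff.mp (Finset.mem_range.mp hi)
    refine ⟨i, hik, ?_⟩
    have hcard : ((k : ℝ) + 1) * ‖F (ubar i)‖ ^ 2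
        ≤ ∑ j ∈ Finset.range (k + 1), ‖F (ubar j)‖ ^ 2 := by
      have := Finset.card_nsmul_le_sum (Finset.range (k + 1))
        (fun j => ‖F (ubar j)‖ ^ 2) (‖F (ubar i)‖ ^ 2) (fun j hj => hmin j hj)
      rw [Finset.card_range, nsmul_eq_mul] at this
      push_cast at this ⊢
      linarith
    have h1 : ((k : ℝ) + 1) * c * ‖F (ubar i)‖ ^ 2 ≤ ‖u 0 - ustar‖ ^ 2 := by
      have h2 := sumle k
      nlinarith [mul_le_mul_of_nonneg_left hcard hcpos.le]
    have hk1 : (0:ℝ) < (k : ℝ) + 1 := by positivity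
    rw [le_div_iff₀ (by positivity)]
    have hA : 2 * L * (((k : ℝ) + 1) * c * ‖F (ubar i)‖ ^ 2)
        ≤ 2 * L * ‖u 0 - ustar‖ ^ 2 := by
      apply mul_le_mul_of_nonneg_left h1 (by linarith)
    have hstep : ((k : ℝ) + 1) * (1 / (4 * L) - ρ) * ‖F (ubar i)‖ ^ 2
        ≤ ((k : ℝ) + 1) * (1 / (2 * L) - ρ) * ‖F (ubar i)‖ ^ 2 := by
      apply mul_le_mul_of_nonneg_right _ (sq_nonneg _)
      apply mul_le_mul_of_nonneg_left (by linarith) hk1.le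
    have heq : ((k : ℝ) + 1) * (1 / (2 * L) - ρ) * ‖F (ubar i)‖ ^ 2
        = 2 * L * (((k : ℝ) + 1) * c * ‖F (ubar i)‖ ^ 2) := by
      rw [← h2Lc]; ring
    linarith
  · have hsummable : Summable (fun i => ‖F (ubar i)‖ ^ 2) := by
      apply summable_of_sum_range_le (c := ‖u 0 - ustar‖ ^ 2 / c) (fun n => sq_nonneg _)
      intro n
      rcases n with _ | m
      · simp; positivity
      · rw [le_div_iff₀ hcpos]
        have := sumle m
        linarith
    have ht2 : Filter.Tendsto (fun i => ‖F (ubar i)‖ ^ 2) Filter.atTop (nhds 0) :=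
      hsummable.tendsto_atTop_zero
    have heq : (fun i => ‖F (ubar i)‖) = fun i => Real.sqrt (‖F (ubar i)‖ ^ 2) := by
      funext i; rw [Real.sqrt_sq (norm_nonneg _)]
    rw [heq]
    have h3 := ht2.sqrt
    rwa [Real.sqrt_zero] at h3
end

section
/- Let F: ℝ^d → ℝ^d be an L-Lipschitz operator satisfying the weak MVI assumption at u* ∈ ℝ^d with F(u*) = 0 and parameter ρ ≥ 0. For EG+ iterates ū_k = u_k - (a_k/β)F(u_k), u_{k+1} = u_k - a_k F(ū_k) with β ∈ (0,1], a_k > 0, and for any γ > 0, the merit function h_k = a_k(⟨F(ū_k), ū_k - u*⟩ + (ρ/2)‖F(ū_k)‖²) satisfies: h_k ≤ (1/2)‖u* - u_k‖² - (1/2)‖u* - u_{k+1}‖² + (a_k/2)(ρ - a_k(1-β))‖F(ū_k)‖² + (a_k²/(2β²))(a_k L γ - β)‖F(u_k)‖² + (1/2)(a_k L/γ - β)‖ū_k - u_{k+1}‖². -/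
open scoped InnerProductSpace

set_option maxHeartbeats 1000000 in
theorem stmt_6 {d : ℕ} (L ρ β γ : ℝ) (hL : 0 < L) (hρ0 : 0 ≤ ρ)
    (hβ0 : 0 < β) (hβ1 : β ≤ 1) (hγ : 0 < γ)
    (F : EuclideanSpace ℝ (Fin d) → EuclideanSpace ℝ (Fin d))
    (hLip : ∀ u v, ‖F u - F v‖ ≤ L * ‖u - v‖)
    (ustar : EuclideanSpace ℝ (Fin d)) (hzero : F ustar = 0)
    (hweak : ∀ u, (inner ℝ (F u) (u - ustar) : ℝ) ≥ -(ρ / 2) * ‖F u‖ ^ 2)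
    (a : ℕ → ℝ) (ha : ∀ k, 0 < a k)
    (u ubar : ℕ → EuclideanSpace ℝ (Fin d))
    (hubar : ∀ k, ubar k = u k - (a k / β) • F (u k))
    (hnext : ∀ k, u (k + 1) = u k - a k • F (ubar k)) (k : ℕ) :
    a k * ((inner ℝ (F (ubar k)) (ubar k - ustar) : ℝ) + (ρ / 2) * ‖F (ubar k)‖ ^ 2) ≤
      (1 / 2) * ‖ustar - u k‖ ^ 2 - (1 / 2) * ‖ustar - u (k + 1)‖ ^ 2 +
        (a k / 2) * (ρ - a k * (1 - β)) * ‖F (ubar k)‖ ^ 2 +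
        ((a k) ^ 2 / (2 * β ^ 2)) * (a k * L * γ - β) * ‖F (u k)‖ ^ 2 +
        (1 / 2) * (a k * L / γ - β) * ‖ubar k - u (k + 1)‖ ^ 2 := by
  have hApos := ha k
  set A := a k with hA
  set X := u k with hX
  set Xb := ubar k with hXbdef
  set Xp := u (k + 1) with hXpdef
  set g := F X with hg
  set gb := F Xb with hgb
  have hXb : Xb = X - (A / β) • g := hubar k
  have hXp : Xp = X - A • gb := hnext k
  have hd : Xb - Xp = A • gb - (A / β) • g := by rw [hXb, hXp]; abel
  have hd2 : ustar - Xp = (ustar - X) + A • gb := by rw [hXp]; abel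
  have hd3 : Xb - ustar = X - ustar - (A / β) • g := by rw [hXb]; abel
  have hd4 : Xb - X = -((A / β) • g) := by rw [hXb]; abel
  have hβ' : β ≠ 0 := hβ0.ne'
  have hγ' : γ ≠ 0 := hγ.ne'
  -- Lipschitz bound
  have hnorm : ‖Xb - X‖ = (A / β) * ‖g‖ := by
    rw [hd4, norm_neg, norm_smul, Real.norm_eq_abs, abs_of_pos (div_pos hApos hβ0)]
  have hLip' : ‖gb - g‖ ≤ L * ((A / β) * ‖g‖) := by
    have h := hLip Xb X
    rw [hnorm] at h
    simpa [mul_assoc] using h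
  -- key inequality (Cauchy–Schwarz + Lipschitz + Young)
  have key : (inner ℝ (gb - g) (Xb - Xp) : ℝ) ≤
      (L * γ * A ^ 2 / (2 * β ^ 2)) * ‖g‖ ^ 2 + (L / (2 * γ)) * ‖Xb - Xp‖ ^ 2 := by
    have h1 : (inner ℝ (gb - g) (Xb - Xp) : ℝ) ≤ ‖gb - g‖ * ‖Xb - Xp‖ := real_inner_le_norm _ _
    have h2 : ‖gb - g‖ * ‖Xb - Xp‖ ≤ (L * ((A / β) * ‖g‖)) * ‖Xb - Xp‖ :=
      mul_le_mul_of_nonneg_right hLip' (norm_nonneg _)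
    set x := (A / β) * ‖g‖ with hxdef
    set y := ‖Xb - Xp‖ with hydef
    have h2γ : (0:ℝ) < 2 * γ := by linarith
    have key0 : 2 * γ * (L * x * y) ≤ 2 * γ * ((L * γ / 2) * x ^ 2 + (L / (2 * γ)) * y ^ 2) := by
      have he : 2 * γ * ((L * γ / 2) * x ^ 2 + (L / (2 * γ)) * y ^ 2)
          = L * γ ^ 2 * x ^ 2 + L * y ^ 2 := by field_simp
      rw [he]
      nlinarith [mul_nonneg hL.le (sq_nonneg (γ * x - y))]
    have hyoung : L * x * y ≤ (L * γ / 2) * x ^ 2 + (L / (2 * γ)) * y ^ 2 :=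
      (mul_le_mul_iff_right₀ h2γ).mp key0
    have hx2 : (L * γ / 2) * x ^ 2 = (L * γ * A ^ 2 / (2 * β ^ 2)) * ‖g‖ ^ 2 := by
      rw [hxdef]; field_simp
    calc (inner ℝ (gb - g) (Xb - Xp) : ℝ) ≤ L * x * y := h1.trans h2
      _ ≤ (L * γ / 2) * x ^ 2 + (L / (2 * γ)) * y ^ 2 := hyoung
      _ = (L * γ * A ^ 2 / (2 * β ^ 2)) * ‖g‖ ^ 2 + (L / (2 * γ)) * ‖Xb - Xp‖ ^ 2 := by
          rw [hx2, hydef]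
  -- expansion identities
  have e1 : ‖ustar - Xp‖ ^ 2 = ‖ustar - X‖ ^ 2 + 2 * A * (inner ℝ (ustar - X) gb : ℝ)
      + A ^ 2 * ‖gb‖ ^ 2 := by
    rw [hd2, norm_add_sq_real, real_inner_smul_right, norm_smul, Real.norm_eq_abs, mul_pow,
      sq_abs]
    ring
  have e2 : ‖Xb - Xp‖ ^ 2 = A ^ 2 * ‖gb‖ ^ 2 - 2 * (A ^ 2 / β) * (inner ℝ gb g : ℝ)
      + (A ^ 2 / β ^ 2) * ‖g‖ ^ 2 := by
    rw [hd, norm_sub_sq_real, real_inner_smul_left, real_inner_smul_right, norm_smul, norm_smul,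
      Real.norm_eq_abs, Real.norm_eq_abs, mul_pow, mul_pow, sq_abs, sq_abs, div_pow]
    try ring
  have e3 : (inner ℝ gb (Xb - ustar) : ℝ)
      = -(inner ℝ (ustar - X) gb : ℝ) - (A / β) * (inner ℝ gb g : ℝ) := by
    have hswap : X - ustar = -(ustar - X) := by abel
    rw [hd3, inner_sub_right, real_inner_smul_right, hswap, inner_neg_right,
      real_inner_comm (ustar - X) gb]
    try ring
  have e4 : (inner ℝ (gb - g) (Xb - Xp) : ℝ) =
      A * ‖gb‖ ^ 2 - (A / β) * (inner ℝ gb g : ℝ) - A * (inner ℝ gb g : ℝ) + (A / β) * ‖g‖ ^ 2 := by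
    rw [hd, inner_sub_left, inner_sub_right, inner_sub_right, real_inner_smul_right,
      real_inner_smul_right, real_inner_smul_right, real_inner_smul_right,
      real_inner_self_eq_norm_sq, real_inner_self_eq_norm_sq, real_inner_comm g gb]
    ring
  rw [e4] at key
  rw [e3, e1, e2]
  set P := ‖g‖ ^ 2 with hPd
  set Q := ‖gb‖ ^ 2 with hQd
  set R := (inner ℝ gb g : ℝ) with hRd
  set T := (inner ℝ (ustar - X) gb : ℝ) with hTd
  set N := ‖ustar - X‖ ^ 2 with hNd
  rw [e2] at key
  have hmul : A * ((A * Q - A / β * R - A * R + A / β * P)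
      - ((L * γ * A ^ 2 / (2 * β ^ 2)) * P
        + (L / (2 * γ)) * (A ^ 2 * Q - 2 * (A ^ 2 / β) * R + (A ^ 2 / β ^ 2) * P))) ≤ 0 :=
    mul_nonpos_of_nonneg_of_nonpos hApos.le (by linarith)
  have iden : A * ((-T - A / β * R) + ρ / 2 * Q)
      - (1 / 2 * N - 1 / 2 * (N + 2 * A * T + A ^ 2 * Q) + A / 2 * (ρ - A * (1 - β)) * Q
        + A ^ 2 / (2 * β ^ 2) * (A * L * γ - β) * P
        + 1 / 2 * (A * L / γ - β) * (A ^ 2 * Q - 2 * (A ^ 2 / β) * R + A ^ 2 / β ^ 2 * P))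
      = A * ((A * Q - A / β * R - A * R + A / β * P)
      - ((L * γ * A ^ 2 / (2 * β ^ 2)) * P
        + (L / (2 * γ)) * (A ^ 2 * Q - 2 * (A ^ 2 / β) * R + (A ^ 2 / β ^ 2) * P))) := by
    field_simp
    ring
  linarith [iden, hmul]
end
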